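/- (Theorem 3.1) Assume the CRK setup. Let M and K be skew-symmetric real d×d matrices, let S : ℝ^d × ℝ → ℝ be continuously differentiable in its first argument (gradient ∇_z S), let D be a skew-symmetric real N×N matrix, let x_0, …, x_{N−1} ∈ ℝ and Δt > 0. For j = 0, …, N−1 let δ_t z_j : [0,1] → ℝ^d be continuous and z_j⁰ ∈ ℝ^d, define z_j(τ) = z_j⁰ + Δt ∫₀¹ A_{τ,σ} δ_t z_j(σ) dσ, z_j¹ = z_j⁰ + Δt ∫₀¹ δ_t z_j(σ) dσ, and δ_x z_j(τ) = Σ_{k=0}^{N−1} D_{jk} z_k(τ), and assume the collocation equations M δ_t z_j(τ) + K δ_x z_j(τ) = ∇_z S(z_j(τ), x_j) hold for all τ ∈ [0,1] and all j. Then for every j, (E_j¹ − E_j⁰)/Δt + Σ_{k=0}^{N−1} D_{jk} F̄_{jk} = 0, where E_j^α = S(z_j^α, x_j) − (1/2) (z_j^α)ᵀ K Σ_{k=0}^{N−1} D_{jk} z_k^α for α ∈ {0,1} (with z_k⁰ = z_k(0)), and F̄_{jk} = (1/2) Σ_{i=1}^s b_i (⟨z_j⟩_iᵀ K ⟨δ_t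 z_k⟩_i + ⟨z_k⟩_iᵀ K ⟨δ_t z_j⟩_i). -/

import Mathlib

open scoped Matrix
open MeasureTheory


open scoped Matrix

noncomputable def dotCLM {d : ℕ} (g : Fin d → ℝ) : (Fin d → ℝ) →L[ℝ] ℝ :=
  ∑ i : Fin d, g i • (ContinuousLinearMap.proj i : (Fin d → ℝ) →L[ℝ] ℝ)

noncomputable def lag {s : ℕ} (c : Fin s → ℝ) (i : Fin s) (τ : ℝ) : ℝ :=
  (Lagrange.basis (Finset.univ : Finset (Fin s)) c i).eval τ

noncomputable def bw {s : ℕ} (c : Fin s → ℝ) (i : Fin s) : ℝ :=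
  ∫ τ in (0:ℝ)..1, lag c i τ

noncomputable def Acrk {s : ℕ} (c : Fin s → ℝ) (τ σ : ℝ) : ℝ :=
  ∑ i : Fin s, (1 / bw c i) * (∫ α in (0:ℝ)..τ, lag c i α) * lag c i σ

noncomputable def wavg {s : ℕ} (c : Fin s → ℝ) (i : Fin s) {G : Type*}
    [NormedAddCommGroup G] [NormedSpace ℝ G] (f : ℝ → G) : G :=
  (1 / bw c i) • ∫ τ in (0:ℝ)..1, lag c i τ • f τ

open MeasureTheory

lemma continuous_lag {s : ℕ} (c : Fin s → ℝ) (i : Fin s) : Continuous (lag c i) :=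
  Polynomial.continuous _

lemma hasDerivAt_intlag {s : ℕ} (c : Fin s → ℝ) (i : Fin s) (τ : ℝ) :
    HasDerivAt (fun t => ∫ α in (0:ℝ)..t, lag c i α) (lag c i τ) τ :=
  ((continuous_lag c i).integral_hasStrictDerivAt 0 τ).hasDerivAt

lemma dotCLM_apply {d : ℕ} (g v : Fin d → ℝ) : dotCLM g v = g ⬝ᵥ v := by
  simp [dotCLM, dotProduct, smul_eq_mul]

lemma dotMT {d : ℕ} (A : Matrix (Fin d) (Fin d) ℝ) (a q : Fin d → ℝ) :
    (A *ᵥ a) ⬝ᵥ q = a ⬝ᵥ (Aᵀ *ᵥ q) := by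
  rw [dotProduct_comm, Matrix.dotProduct_mulVec, ← Matrix.mulVec_transpose,
    dotProduct_comm]

lemma skew_dot {d : ℕ} {M : Matrix (Fin d) (Fin d) ℝ} (hM : Mᵀ = -M) (a : Fin d → ℝ) :
    a ⬝ᵥ M *ᵥ a = 0 := by
  have h : a ⬝ᵥ M *ᵥ a = -(a ⬝ᵥ M *ᵥ a) := by
    conv_lhs => rw [Matrix.dotProduct_mulVec, ← Matrix.mulVec_transpose, hM]
    simp [Matrix.neg_mulVec, dotProduct_comm]
  linarith

lemma integral_lag_dot {d : ℕ} (l : ℝ → ℝ) (f : ℝ → Fin d → ℝ)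
    (hf : IntervalIntegrable (fun σ => l σ • f σ) volume 0 1) (q : Fin d → ℝ) :
    ∫ τ in (0:ℝ)..1, l τ * (f τ ⬝ᵥ q) = (∫ τ in (0:ℝ)..1, l τ • f τ) ⬝ᵥ q := by
  have e : ∀ τ, l τ * (f τ ⬝ᵥ q) = dotCLM q (l τ • f τ) := by
    intro τ
    rw [dotCLM_apply, dotProduct_smul, dotProduct_comm, smul_eq_mul]
  simp only [e]
  rw [ContinuousLinearMap.intervalIntegral_comp_comm (dotCLM q) hf, dotCLM_apply,
    dotProduct_comm]

lemma dot_smul_sum {s d : ℕ} (g : Fin d → ℝ) (Δt : ℝ) (l : Fin s → ℝ) (u : Fin s → Fin d → ℝ) :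
    g ⬝ᵥ (Δt • ∑ i, l i • u i) = Δt * ∑ i, l i * (g ⬝ᵥ u i) := by
  rw [← dotCLM_apply, _root_.map_smul, map_sum]
  simp [dotCLM_apply, smul_eq_mul, dotProduct_smul]

lemma hasDerivAt_dot_mulVec {d : ℕ} (K : Matrix (Fin d) (Fin d) ℝ) {a b : ℝ → Fin d → ℝ}
    {a' b' : Fin d → ℝ} {τ : ℝ} (ha : HasDerivAt a a' τ) (hb : HasDerivAt b b' τ) :
    HasDerivAt (fun t => a t ⬝ᵥ K *ᵥ b t) (a' ⬝ᵥ K *ᵥ b τ + a τ ⬝ᵥ K *ᵥ b') τ := by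
  have h1 : ∀ p, HasDerivAt (fun t => (K *ᵥ b t) p) ((K *ᵥ b') p) τ := by
    intro p
    simpa [Matrix.mulVec, dotProduct] using
      HasDerivAt.fun_sum (fun q (_ : q ∈ Finset.univ) => ((hasDerivAt_pi.mp hb q).const_mul (K p q)))
  have h2 : HasDerivAt (fun t => ∑ p, a t p * (K *ᵥ b t) p)
      (∑ p, (a' p * (K *ᵥ b τ) p + a τ p * (K *ᵥ b') p)) τ :=
    HasDerivAt.fun_sum fun p _ => ((hasDerivAt_pi.mp ha p).mul (h1 p))
  simpa [dotProduct, Finset.sum_add_distrib] using h2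

lemma contOn_dot {d : ℕ} {f : ℝ → Fin d → ℝ} {s : Set ℝ} (hf : ContinuousOn f s)
    (q : Fin d → ℝ) : ContinuousOn (fun t => f t ⬝ᵥ q) s := by
  simp only [dotProduct]
  exact continuousOn_finset_sum _ fun p _ =>
    ((continuous_apply p).comp_continuousOn hf).mul continuousOn_const

lemma cont_dot_mulVec {d : ℕ} (K : Matrix (Fin d) (Fin d) ℝ) {a b : ℝ → Fin d → ℝ}
    (ha : Continuous a) (hb : Continuous b) : Continuous (fun t => a t ⬝ᵥ K *ᵥ b t) := by
  simp only [dotProduct, Matrix.mulVec]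
  exact continuous_finset_sum _ fun p _ =>
    ((continuous_apply p).comp ha).mul
      (continuous_finset_sum _ fun q _ => continuous_const.mul ((continuous_apply q).comp hb))

lemma cont_dot {d : ℕ} {a b : ℝ → Fin d → ℝ} (ha : Continuous a) (hb : Continuous b) :
    Continuous (fun t => a t ⬝ᵥ b t) := by
  simp only [dotProduct]
  exact continuous_finset_sum _ fun p _ =>
    ((continuous_apply p).comp ha).mul ((continuous_apply p).comp hb)

lemma sum_dotProduct' {ι : Type*} {d : ℕ} (s : Finset ι) (f : ι → Fin d → ℝ) (q : Fin d → ℝ) :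
    (∑ i ∈ s, f i) ⬝ᵥ q = ∑ i ∈ s, f i ⬝ᵥ q := by
  simp only [dotProduct, Finset.sum_apply, Finset.sum_mul]
  rw [Finset.sum_comm]

set_option maxHeartbeats 2000000 in
theorem stmt6 {s d N : ℕ} (hs : 1 ≤ s) (c : Fin s → ℝ) (hc : Function.Injective c)
    (hb : ∀ i, bw c i ≠ 0)
    (M K : Matrix (Fin d) (Fin d) ℝ) (hM : Mᵀ = -M) (hK : Kᵀ = -K)
    (S : (Fin d → ℝ) → ℝ → ℝ) (gradS : (Fin d → ℝ) → ℝ → (Fin d → ℝ))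
    (hS : ∀ (x : ℝ) (w : Fin d → ℝ), HasFDerivAt (fun w' => S w' x) (dotCLM (gradS w x)) w)
    (hSc : ∀ x : ℝ, Continuous fun w => gradS w x)
    (D : Matrix (Fin N) (Fin N) ℝ) (hD : Dᵀ = -D)
    (x : Fin N → ℝ) (Δt : ℝ) (hΔt : 0 < Δt)
    (δtz : Fin N → ℝ → (Fin d → ℝ)) (hδtc : ∀ j, ContinuousOn (δtz j) (Set.Icc 0 1))
    (z0 : Fin N → Fin d → ℝ) (z : Fin N → ℝ → (Fin d → ℝ))
    (hz : ∀ j τ, z j τ = z0 j + Δt • ∫ σ in (0:ℝ)..1, Acrk c τ σ • δtz j σ)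
    (z1 : Fin N → Fin d → ℝ)
    (hz1 : ∀ j, z1 j = z0 j + Δt • ∫ σ in (0:ℝ)..1, δtz j σ)
    (δxz : Fin N → ℝ → (Fin d → ℝ))
    (hδx : ∀ j τ, δxz j τ = ∑ k, D j k • z k τ)
    (hcoll : ∀ j, ∀ τ ∈ Set.Icc (0:ℝ) 1,
      M.mulVec (δtz j τ) + K.mulVec (δxz j τ) = gradS (z j τ) (x j))
    (E0 E1 : Fin N → ℝ)
    (hE0 : ∀ j, E0 j = S (z j 0) (x j)
        - (1/2) * dotProduct (z j 0) (K.mulVec (∑ k, D j k • z k 0)))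
    (hE1 : ∀ j, E1 j = S (z1 j) (x j)
        - (1/2) * dotProduct (z1 j) (K.mulVec (∑ k, D j k • z1 k)))
    (Fb : Fin N → Fin N → ℝ)
    (hFb : ∀ j k, Fb j k = (1/2) * ∑ i, bw c i *
        (dotProduct (wavg c i (z j)) (K.mulVec (wavg c i (δtz k)))
          + dotProduct (wavg c i (z k)) (K.mulVec (wavg c i (δtz j))))) :
    ∀ j, (E1 j - E0 j) / Δt + ∑ k, D j k * Fb j k = 0 := by
  intro j
  classical
  have h01 : (0:ℝ) ≤ 1 := zero_le_one
  have huIcc : Set.uIcc (0:ℝ) 1 = Set.Icc 0 1 := Set.uIcc_of_le h01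
  have hne : Δt ≠ 0 := ne_of_gt hΔt
  have hδint : ∀ (i : Fin s) (k : Fin N),
      IntervalIntegrable (fun σ => lag c i σ • δtz k σ) volume 0 1 := by
    intro i k
    apply ContinuousOn.intervalIntegrable
    rw [huIcc]
    exact ((continuous_lag c i).continuousOn).smul (hδtc k)
  -- closed form for z
  set v : Fin s → Fin N → Fin d → ℝ :=
    fun i k => ∫ σ in (0:ℝ)..1, lag c i σ • δtz k σ with hv
  have hwavgδ : ∀ i k, wavg c i (δtz k) = (1 / bw c i) • v i k := fun i k => rfl
  have hzz : ∀ k τ, z k τ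
      = z0 k + Δt • ∑ i, ((1 / bw c i) * ∫ α in (0:ℝ)..τ, lag c i α) • v i k := by
    intro k τ
    have e : ∀ σ, Acrk c τ σ • δtz k σ
        = ∑ i, ((1 / bw c i) * ∫ α in (0:ℝ)..τ, lag c i α) • (lag c i σ • δtz k σ) := by
      intro σ
      rw [Acrk, Finset.sum_smul]
      exact Finset.sum_congr rfl fun i _ => by rw [smul_smul]
    have eint : (∫ σ in (0:ℝ)..1, Acrk c τ σ • δtz k σ)
        = ∑ i, ((1 / bw c i) * ∫ α in (0:ℝ)..τ, lag c i α) • v i k := by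
      simp only [e]
      have hint' : ∀ i : Fin s, IntervalIntegrable
          (fun σ => ((1 / bw c i) * ∫ α in (0:ℝ)..τ, lag c i α) • (lag c i σ • δtz k σ))
          volume 0 1 := fun i =>
        (hδint i k).smul (R := ℝ) ((1 / bw c i) * ∫ α in (0:ℝ)..τ, lag c i α)
      rw [intervalIntegral.integral_finset_sum (fun i _ => hint' i)]
      refine Finset.sum_congr rfl fun i _ => ?_
      rw [hv]
      exact intervalIntegral.integral_smul _ _
    rw [hz k τ, eint]
  -- derivative of z
  set zd : Fin N → ℝ → Fin d → ℝ :=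
    fun k t => Δt • ∑ i, lag c i t • wavg c i (δtz k) with hzd
  have hzderiv : ∀ k τ, HasDerivAt (z k) (zd k τ) τ := by
    intro k τ
    have h1 : HasDerivAt
        (fun t => z0 k + Δt • ∑ i, ((1 / bw c i) * ∫ α in (0:ℝ)..t, lag c i α) • v i k)
        (Δt • ∑ i, ((1 / bw c i) * lag c i τ) • v i k) τ := by
      refine HasDerivAt.const_add _ ?_
      refine HasDerivAt.fun_const_smul _ ?_
      exact HasDerivAt.fun_sum fun i _ =>
        ((hasDerivAt_intlag c i τ).const_mul (1 / bw c i)).smul_const (v i k)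
    have e : z k = fun t =>
        z0 k + Δt • ∑ i, ((1 / bw c i) * ∫ α in (0:ℝ)..t, lag c i α) • v i k :=
      funext (hzz k)
    have hval : (Δt • ∑ i, ((1 / bw c i) * lag c i τ) • v i k) = zd k τ := by
      simp only [hzd, hwavgδ, smul_smul]
      congr 1
      exact Finset.sum_congr rfl fun i _ => by rw [mul_comm]
    rw [e, ← hval]
    exact h1
  have contzd : ∀ k, Continuous (zd k) := by
    intro k
    simp only [hzd]
    exact continuous_const.fun_smul (continuous_finset_sum _ fun i _ =>
      (continuous_lag c i).fun_smul continuous_const)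
  have contz : ∀ k, Continuous (z k) :=
    fun k => Differentiable.continuous (fun t => (hzderiv k t).differentiableAt)
  -- endpoints
  have hz0 : ∀ k, z k 0 = z0 k := by
    intro k; rw [hzz k 0]; simp
  have hlagsum : ∀ σ, ∑ i, lag c i σ = 1 := by
    intro σ
    have hnonempty : Nonempty (Fin s) := ⟨⟨0, hs⟩⟩
    have hb1 := Lagrange.sum_basis (s := (Finset.univ : Finset (Fin s))) (v := c)
      hc.injOn Finset.univ_nonempty
    calc ∑ i, lag c i σ
        = Polynomial.eval σ (∑ i, Lagrange.basis Finset.univ c i) := by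
          rw [Polynomial.eval_finset_sum]; rfl
      _ = 1 := by rw [hb1, Polynomial.eval_one]
  have hz1' : ∀ k, z k 1 = z1 k := by
    intro k
    rw [hzz k 1, hz1 k]
    have e1 : ∀ i : Fin s, ((1 / bw c i) * ∫ α in (0:ℝ)..1, lag c i α) = 1 := fun i => by
      rw [show (∫ α in (0:ℝ)..1, lag c i α) = bw c i from rfl, one_div_mul_cancel (hb i)]
    have e1' : ∀ i : Fin s,
        ((1 / bw c i) * ∫ α in (0:ℝ)..1, lag c i α) • v i k = v i k := fun i => by
      rw [e1 i, one_smul]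
    have e2 : (∑ i, ((1 / bw c i) * ∫ α in (0:ℝ)..1, lag c i α) • v i k)
        = ∫ σ in (0:ℝ)..1, δtz k σ := by
      rw [Finset.sum_congr rfl fun i _ => e1' i]
      simp only [hv]
      rw [← intervalIntegral.integral_finset_sum (fun i _ => hδint i k)]
      refine intervalIntegral.integral_congr fun σ _ => ?_
      rw [← Finset.sum_smul, hlagsum, one_smul]
    rw [e2]
  -- spatial combination and energy
  set w : ℝ → Fin d → ℝ := fun t => ∑ k, D j k • z k t with hw
  set wd : ℝ → Fin d → ℝ := fun t => ∑ k, D j k • zd k t with hwd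
  have hwderiv : ∀ τ, HasDerivAt w (wd τ) τ := fun τ =>
    HasDerivAt.fun_sum fun k _ => (hzderiv k τ).fun_const_smul (D j k)
  have contw : Continuous w := continuous_finset_sum _ fun k _ => ((contz k).fun_const_smul _)
  have contwd : Continuous wd := continuous_finset_sum _ fun k _ => ((contzd k).fun_const_smul _)
  set φ : ℝ → ℝ := fun t => S (z j t) (x j) - (1/2) * (z j t ⬝ᵥ K *ᵥ w t) with hφdef
  set φd : ℝ → ℝ := fun t => gradS (z j t) (x j) ⬝ᵥ zd j t
      - (1/2) * (zd j t ⬝ᵥ K *ᵥ w t + z j t ⬝ᵥ K *ᵥ wd t) with hφddef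
  have hφderiv : ∀ τ, HasDerivAt φ (φd τ) τ := by
    intro τ
    have hSd : HasDerivAt (fun t => S (z j t) (x j)) (gradS (z j τ) (x j) ⬝ᵥ zd j τ) τ := by
      have h := (hS (x j) (z j τ)).comp_hasDerivAt τ (hzderiv j τ)
      simpa [Function.comp, Function.comp_def, dotCLM_apply] using h
    simp only [hφdef, hφddef]
    exact hSd.sub ((hasDerivAt_dot_mulVec K (hzderiv j τ) (hwderiv τ)).const_mul (1/2))
  have contφd : Continuous φd := by
    simp only [hφddef]
    exact (cont_dot ((hSc (x j)).comp (contz j)) (contzd j)).sub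
      (continuous_const.mul ((cont_dot_mulVec K (contzd j) contw).add
        (cont_dot_mulVec K (contz j) contwd)))
  have hftc : (∫ t in (0:ℝ)..1, φd t) = φ 1 - φ 0 :=
    intervalIntegral.integral_eq_sub_of_hasDerivAt (fun t _ => hφderiv t)
      (contφd.intervalIntegrable 0 1)
  set ψ : ℝ → ℝ := fun t => (M *ᵥ δtz j t + K *ᵥ w t) ⬝ᵥ zd j t
      - (1/2) * (zd j t ⬝ᵥ K *ᵥ w t + z j t ⬝ᵥ K *ᵥ wd t) with hψdef
  have hφψ : (∫ t in (0:ℝ)..1, φd t) = ∫ t in (0:ℝ)..1, ψ t := by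
    refine intervalIntegral.integral_congr fun t ht => ?_
    rw [huIcc] at ht
    have hc' := hcoll j t ht
    rw [hδx j t] at hc'
    have hgr : gradS (z j t) (x j) = M *ᵥ δtz j t + K *ᵥ w t := by
      rw [← hc']
      try simp only [hw]
    simp only [hφddef, hψdef, hgr]
  -- integral identities
  have I1 : ∀ i (k : Fin N), (∫ t in (0:ℝ)..1, lag c i t • δtz k t)
      = bw c i • wavg c i (δtz k) := by
    intro i k
    rw [show wavg c i (δtz k) = (1 / bw c i) • ∫ τ in (0:ℝ)..1, lag c i τ • δtz k τ from rfl]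
    rw [smul_smul, mul_one_div_cancel (hb i), one_smul]
  have hzint : ∀ i (k : Fin N), IntervalIntegrable (fun t => lag c i t • z k t) volume 0 1 :=
    fun i k => ((continuous_lag c i).smul (contz k)).intervalIntegrable 0 1
  have I2 : ∀ i (k : Fin N), (∫ t in (0:ℝ)..1, lag c i t • z k t)
      = bw c i • wavg c i (z k) := by
    intro i k
    rw [show wavg c i (z k) = (1 / bw c i) • ∫ τ in (0:ℝ)..1, lag c i τ • z k τ from rfl]
    rw [smul_smul, mul_one_div_cancel (hb i), one_smul]
  have hwint0 : ∀ i : Fin s, IntervalIntegrable (fun t => lag c i t • w t) volume 0 1 :=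
    fun i => ((continuous_lag c i).smul contw).intervalIntegrable 0 1
  have I3 : ∀ i : Fin s, (∫ t in (0:ℝ)..1, lag c i t • w t)
      = ∑ k, D j k • (bw c i • wavg c i (z k)) := by
    intro i
    have e : ∀ t, lag c i t • w t = ∑ k, D j k • (lag c i t • z k t) := by
      intro t
      simp only [hw]
      rw [Finset.smul_sum]
      exact Finset.sum_congr rfl fun k _ => smul_comm _ _ _
    simp only [e]
    have hint' : ∀ k : Fin N, IntervalIntegrable
        (fun t => D j k • (lag c i t • z k t)) volume 0 1 := fun k =>
      (hzint i k).smul (R := ℝ) (D j k)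
    rw [intervalIntegral.integral_finset_sum (fun k _ => hint' k)]
    refine Finset.sum_congr rfl fun k _ => ?_
    rw [intervalIntegral.integral_smul, I2 i k]
  -- expanded integrand
  set Af : ℝ → ℝ := fun t => Δt * ∑ i, lag c i t *
    (δtz j t ⬝ᵥ (Mᵀ *ᵥ wavg c i (δtz j))) with hA
  set Bf : ℝ → ℝ := fun t => Δt * ∑ i, lag c i t *
    (w t ⬝ᵥ (Kᵀ *ᵥ wavg c i (δtz j))) with hB
  set Cf : ℝ → ℝ := fun t => Δt * ∑ k, D j k * ∑ i, lag c i t *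
    (z j t ⬝ᵥ (K *ᵥ wavg c i (δtz k))) with hC
  have ea : ∀ t, (M *ᵥ δtz j t + K *ᵥ w t) ⬝ᵥ zd j t = Af t + Bf t := by
    intro t
    simp only [hzd, hA, hB]
    rw [dot_smul_sum]
    have e : ∀ i : Fin s, lag c i t * ((M *ᵥ δtz j t + K *ᵥ w t) ⬝ᵥ wavg c i (δtz j))
        = lag c i t * (δtz j t ⬝ᵥ (Mᵀ *ᵥ wavg c i (δtz j)))
          + lag c i t * (w t ⬝ᵥ (Kᵀ *ᵥ wavg c i (δtz j))) := by
      intro i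
      rw [add_dotProduct, dotMT, dotMT, mul_add]
    rw [Finset.sum_congr rfl fun i _ => e i, Finset.sum_add_distrib, mul_add]
  have eb : ∀ t, zd j t ⬝ᵥ K *ᵥ w t = Bf t := by
    intro t
    rw [dotProduct_comm]
    simp only [hzd, hB]
    rw [dot_smul_sum]
    refine congrArg (fun r => Δt * r) (Finset.sum_congr rfl fun i _ => ?_)
    rw [dotMT]
  have ec : ∀ t, z j t ⬝ᵥ K *ᵥ wd t = Cf t := by
    intro t
    have e0 : ∀ X : Fin d → ℝ, z j t ⬝ᵥ K *ᵥ X = dotCLM (Kᵀ *ᵥ z j t) X := by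
      intro X
      rw [dotCLM_apply, dotMT Kᵀ (z j t) X, Matrix.transpose_transpose]
    simp only [hwd, hC]
    rw [e0, map_sum]
    have e1 : ∀ k : Fin N, dotCLM (Kᵀ *ᵥ z j t) (D j k • zd k t)
        = D j k * (Δt * ∑ i, lag c i t * (z j t ⬝ᵥ (K *ᵥ wavg c i (δtz k)))) := by
      intro k
      rw [ContinuousLinearMap.map_smul, smul_eq_mul]
      congr 1
      rw [dotCLM_apply]
      simp only [hzd]
      rw [dot_smul_sum]
      refine congrArg (fun r => Δt * r) (Finset.sum_congr rfl fun i _ => ?_)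
      rw [dotMT, Matrix.transpose_transpose]
    rw [Finset.sum_congr rfl fun k _ => e1 k, Finset.mul_sum]
    exact Finset.sum_congr rfl fun k _ => by ring
  have hψeq : ∀ t, ψ t = Af t + Bf t - (1/2) * (Bf t + Cf t) := by
    intro t
    simp only [hψdef]
    rw [ea t, eb t, ec t]
  -- integrability of the pieces
  have hAI : IntervalIntegrable Af volume 0 1 := by
    apply ContinuousOn.intervalIntegrable
    rw [huIcc]
    simp only [hA]
    exact continuousOn_const.mul (continuousOn_finset_sum _ fun i _ =>
      ((continuous_lag c i).continuousOn).mul (contOn_dot (hδtc j) _))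
  have hBI : IntervalIntegrable Bf volume 0 1 := by
    simp only [hB]
    exact (continuous_const.mul (continuous_finset_sum _ fun i _ =>
      (continuous_lag c i).mul (cont_dot contw continuous_const))).intervalIntegrable 0 1
  have hCI : IntervalIntegrable Cf volume 0 1 := by
    simp only [hC]
    exact (continuous_const.mul (continuous_finset_sum _ fun k _ =>
      continuous_const.mul (continuous_finset_sum _ fun i _ =>
        (continuous_lag c i).mul (cont_dot (contz j) continuous_const)))).intervalIntegrable 0 1
  have e_split : (∫ t in (0:ℝ)..1, ψ t)
      = (∫ t in (0:ℝ)..1, Af t) + (∫ t in (0:ℝ)..1, Bf t)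
        - (1/2) * ((∫ t in (0:ℝ)..1, Bf t) + (∫ t in (0:ℝ)..1, Cf t)) := by
    rw [intervalIntegral.integral_congr
      (g := fun t => Af t + Bf t - (1/2) * (Bf t + Cf t)) (fun t _ => hψeq t)]
    rw [intervalIntegral.integral_sub (hAI.add hBI) ((hBI.add hCI).const_mul _),
      intervalIntegral.integral_add hAI hBI,
      intervalIntegral.integral_const_mul ((1:ℝ)/2) (fun t => Bf t + Cf t),
      intervalIntegral.integral_add hBI hCI]
  -- the three integrals
  have hAint : ∀ i : Fin s, IntervalIntegrable
      (fun t => lag c i t * (δtz j t ⬝ᵥ (Mᵀ *ᵥ wavg c i (δtz j)))) volume 0 1 := by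
    intro i
    apply ContinuousOn.intervalIntegrable
    rw [huIcc]
    exact ((continuous_lag c i).continuousOn).mul (contOn_dot (hδtc j) _)
  have IA : (∫ t in (0:ℝ)..1, Af t) = 0 := by
    simp only [hA]
    rw [intervalIntegral.integral_const_mul,
      intervalIntegral.integral_finset_sum (fun i _ => hAint i)]
    have e : ∀ i : Fin s,
        (∫ t in (0:ℝ)..1, lag c i t * (δtz j t ⬝ᵥ (Mᵀ *ᵥ wavg c i (δtz j)))) = 0 := by
      intro i
      rw [integral_lag_dot _ _ (hδint i j), I1 i j, hM, Matrix.neg_mulVec,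
        dotProduct_neg, smul_dotProduct, skew_dot hM]
      simp
    rw [Finset.sum_congr rfl fun i _ => e i]
    simp
  have hBint : ∀ i : Fin s, IntervalIntegrable
      (fun t => lag c i t * (w t ⬝ᵥ (Kᵀ *ᵥ wavg c i (δtz j)))) volume 0 1 :=
    fun i => ((continuous_lag c i).mul
      (cont_dot contw continuous_const)).intervalIntegrable 0 1
  have IB : (∫ t in (0:ℝ)..1, Bf t)
      = -(Δt * ∑ k, ∑ i, D j k * (bw c i *
          (wavg c i (z k) ⬝ᵥ (K *ᵥ wavg c i (δtz j))))) := by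
    simp only [hB]
    rw [intervalIntegral.integral_const_mul,
      intervalIntegral.integral_finset_sum (fun i _ => hBint i)]
    have e2 : ∀ i : Fin s,
        (∫ t in (0:ℝ)..1, lag c i t * (w t ⬝ᵥ (Kᵀ *ᵥ wavg c i (δtz j))))
        = ∑ k, -(D j k * (bw c i * (wavg c i (z k) ⬝ᵥ (K *ᵥ wavg c i (δtz j))))) := by
      intro i
      rw [integral_lag_dot _ _ (hwint0 i), I3 i, sum_dotProduct']
      refine Finset.sum_congr rfl fun k _ => ?_
      rw [smul_dotProduct, smul_dotProduct, hK, Matrix.neg_mulVec,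
        dotProduct_neg, smul_eq_mul, smul_eq_mul]
      ring
    rw [Finset.sum_congr rfl fun i _ => e2 i, Finset.sum_comm]
    simp only [Finset.sum_neg_distrib, mul_neg]
  have hCint2 : ∀ (k : Fin N) (i : Fin s), IntervalIntegrable
      (fun t => lag c i t * (z j t ⬝ᵥ (K *ᵥ wavg c i (δtz k)))) volume 0 1 :=
    fun k i => ((continuous_lag c i).mul
      (cont_dot (contz j) continuous_const)).intervalIntegrable 0 1
  have hkint : ∀ k : Fin N, IntervalIntegrable
      (fun t => D j k * ∑ i, lag c i t * (z j t ⬝ᵥ (K *ᵥ wavg c i (δtz k)))) volume 0 1 :=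
    fun k => (continuous_const.mul (continuous_finset_sum _ fun i _ =>
      (continuous_lag c i).mul (cont_dot (contz j) continuous_const))).intervalIntegrable 0 1
  have IC : (∫ t in (0:ℝ)..1, Cf t)
      = Δt * ∑ k, ∑ i, D j k * (bw c i *
          (wavg c i (z j) ⬝ᵥ (K *ᵥ wavg c i (δtz k)))) := by
    simp only [hC]
    rw [intervalIntegral.integral_const_mul,
      intervalIntegral.integral_finset_sum (fun k _ => hkint k)]
    refine congrArg (fun r => Δt * r) (Finset.sum_congr rfl fun k _ => ?_)
    rw [intervalIntegral.integral_const_mul,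
      intervalIntegral.integral_finset_sum (fun i _ => hCint2 k i), Finset.mul_sum]
    refine Finset.sum_congr rfl fun i _ => ?_
    rw [integral_lag_dot _ _ (hzint i j), I2 i j, smul_dotProduct, smul_eq_mul]
    try ring
  -- energy endpoints
  have hE0j : φ 0 = E0 j := by
    rw [hE0 j]
    try simp only [hφdef, hw]
  have hE1j : φ 1 = E1 j := by
    rw [hE1 j]
    simp only [hφdef, hw, hz1']
  -- final assembly
  have hkey : E1 j - E0 j = -(Δt * ∑ k, D j k * Fb j k) := by
    rw [← hE1j, ← hE0j, ← hftc, hφψ, e_split, IA, IB, IC]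
    have f3 : ∑ k, D j k * Fb j k
        = ∑ k, ∑ i, ((1/2) * (D j k * (bw c i *
            (wavg c i (z j) ⬝ᵥ (K *ᵥ wavg c i (δtz k)))))
          + (1/2) * (D j k * (bw c i *
            (wavg c i (z k) ⬝ᵥ (K *ᵥ wavg c i (δtz j)))))) := by
      refine Finset.sum_congr rfl fun k _ => ?_
      rw [hFb j k, Finset.mul_sum, Finset.mul_sum]
      exact Finset.sum_congr rfl fun i _ => by ring
    have split : ∀ g h : Fin N → Fin s → ℝ,
        ∑ k, ∑ i, (g k i + h k i) = (∑ k, ∑ i, g k i) + (∑ k, ∑ i, h k i) := by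
      intro g h
      simp [Finset.sum_add_distrib]
    have pull : ∀ g : Fin N → Fin s → ℝ,
        ∑ k, ∑ i, (1/2:ℝ) * g k i = (1/2) * ∑ k, ∑ i, g k i := by
      intro g
      simp [Finset.mul_sum]
    rw [f3, split, pull, pull]
    ring
  rw [hkey]
  field_simp
  try ring
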